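/- Let t1, t2 be nonzero real numbers and let z ∈ ℂ satisfy z ∉ Σ(t1,t2) := {E ∈ ℝ : | |t1| − |t2| | ≤ |E| ≤ |t1| + |t2|}. Then the 2×2 complex transfer matrix T(z) = [[−t1/t2, z/t2], [−z/t2, z²/(t1·t2) − t2/t1]] has precisely one eigenvalue λ with |λ| < 1 and precisely one eigenvalue μ with |μ| > 1, and λ·μ = 1. -/

import Mathlib

open Polynomial in
lemma charpoly_fin_two' (a b c d : ℂ) : (!![a,b;c,d] : Matrix (Fin 2) (Fin 2) ℂ).charpoly
    = X ^ 2 - C (a + d) * X + C (a * d - b * c) := by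
  rw [Matrix.charpoly, Matrix.det_fin_two]
  simp [Matrix.charmatrix_apply_eq, Matrix.charmatrix_apply_ne]
  ring

open Polynomial in
lemma roots_quad (τ lam mu : ℂ) (hsum : lam + mu = τ) (hprod : lam * mu = 1) :
    (X ^ 2 - C τ * X + C 1 : ℂ[X]).roots = {lam, mu} := by
  have hfac : (X ^ 2 - C τ * X + C 1 : ℂ[X]) = (X - C lam) * (X - C mu) := by
    rw [← hsum, ← hprod]
    simp only [map_add, map_mul]
    ring
  rw [hfac, Polynomial.roots_mul (by
      exact mul_ne_zero (Polynomial.X_sub_C_ne_zero lam) (Polynomial.X_sub_C_ne_zero mu)),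
    Polynomial.roots_X_sub_C, Polynomial.roots_X_sub_C]
  rfl

open Matrix in
/-- Outside the bulk SSH spectrum `Σ(t1,t2)`, the SSH transfer matrix `T(z)` has precisely one
eigenvalue `λ` of modulus `< 1` and one eigenvalue `μ` of modulus `> 1`, with `λ·μ = 1`
(the multiset of roots of its characteristic polynomial is `{λ, μ}`). -/
theorem stmt_5 (t1 t2 : ℝ) (ht1 : t1 ≠ 0) (ht2 : t2 ≠ 0) (z : ℂ)
    (hz : z ∉ {w : ℂ | ∃ E : ℝ, w = (E : ℂ) ∧
      |(|t1| - |t2|)| ≤ |E| ∧ |E| ≤ |t1| + |t2|}) :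
    ∃ lam mu : ℂ, ‖lam‖ < 1 ∧ 1 < ‖mu‖ ∧ lam * mu = 1 ∧
      (!![-(t1 : ℂ) / t2, z / t2;
          -z / t2, z ^ 2 / ((t1 : ℂ) * t2) - (t2 : ℂ) / t1]).charpoly.roots = {lam, mu} := by
  have ht1' : (t1 : ℂ) ≠ 0 := by exact_mod_cast ht1
  have ht2' : (t2 : ℂ) ≠ 0 := by exact_mod_cast ht2
  set τ : ℂ := (z ^ 2 - (t1 : ℂ) ^ 2 - (t2 : ℂ) ^ 2) / ((t1 : ℂ) * (t2 : ℂ)) with hτ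
  -- charpoly computation
  have hcp : (!![-(t1 : ℂ) / t2, z / t2;
          -z / t2, z ^ 2 / ((t1 : ℂ) * t2) - (t2 : ℂ) / t1]).charpoly
      = Polynomial.X ^ 2 - Polynomial.C τ * Polynomial.X + Polynomial.C 1 := by
    rw [charpoly_fin_two' (-(t1 : ℂ) / t2) (z / t2) (-z / t2)
        (z ^ 2 / ((t1 : ℂ) * t2) - (t2 : ℂ) / t1)]
    have h1 : -(t1 : ℂ) / t2 + (z ^ 2 / ((t1 : ℂ) * t2) - (t2 : ℂ) / t1) = τ := by
      field_simp [hτ]; rw [hτ]; field_simp; ring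
    have h2 : -(t1 : ℂ) / t2 * (z ^ 2 / ((t1 : ℂ) * t2) - (t2 : ℂ) / t1)
        - z / t2 * (-z / t2) = 1 := by
      field_simp
      ring_nf
    rw [h1, h2]
  -- roots via quadratic formula
  obtain ⟨s, hs⟩ := IsAlgClosed.exists_pow_nat_eq (τ ^ 2 - 4) (n := 2) (by norm_num)
  set l : ℂ := (τ - s) / 2 with hl
  set m : ℂ := (τ + s) / 2 with hm
  have hsum : l + m = τ := by rw [hl, hm]; ring
  have hprod : l * m = 1 := by
    rw [hl, hm]
    have : (τ - s) / 2 * ((τ + s) / 2) = (τ ^ 2 - s ^ 2) / 4 := by ring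
    rw [this, hs]; ring
  have hroots : (!![-(t1 : ℂ) / t2, z / t2;
          -z / t2, z ^ 2 / ((t1 : ℂ) * t2) - (t2 : ℂ) / t1]).charpoly.roots = {l, m} := by
    rw [hcp]; exact roots_quad τ l m hsum hprod
  -- |l| ≠ 1
  have key : ‖l‖ ≠ 1 := by
    intro h1
    have hl0 : l ≠ 0 := by
      intro h; rw [h] at h1; simp at h1
    -- m = conj l
    have hm_inv : m = l⁻¹ := by
      field_simp at hprod ⊢
      linear_combination hprod
    have hconj : l⁻¹ = (starRingEnd ℂ) l := by
      have hn : Complex.normSq l = 1 := by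
        rw [← Complex.sq_norm, h1]; norm_num
      have h2 : (starRingEnd ℂ) l * l = 1 := by
        rw [mul_comm, Complex.mul_conj, hn]; norm_num
      exact (eq_inv_of_mul_eq_one_left h2).symm
    have hτre : τ = ((2 * l.re : ℝ) : ℂ) := by
      rw [← hsum, hm_inv, hconj]
      simp [Complex.ext_iff, Complex.add_re, Complex.add_im]
      ring
    have hre_le : |2 * l.re| ≤ 2 := by
      have := Complex.abs_re_le_norm l
      rw [h1] at this
      rw [abs_mul]
      simp only [abs_two]
      nlinarith [abs_nonneg l.re]
    -- z^2 is real
    set r : ℝ := 2 * l.re * (t1 * t2) + t1 ^ 2 + t2 ^ 2 with hr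
    have hz2 : z ^ 2 = (r : ℂ) := by
      have : τ * ((t1 : ℂ) * t2) = z ^ 2 - (t1 : ℂ) ^ 2 - (t2 : ℂ) ^ 2 := by
        rw [hτ]; field_simp
      rw [hτre] at this
      push_cast [hr]
      push_cast at this
      linear_combination -this
    -- bounds on r
    have hb1 : (|t1| - |t2|) ^ 2 ≤ r := by
      have h2 : |2 * l.re * (t1 * t2)| ≤ 2 * |t1 * t2| := by
        rw [abs_mul]
        have : |t1 * t2| ≥ 0 := abs_nonneg _
        nlinarith [neg_abs_le (2 * l.re), le_abs_self (2 * l.re)]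
      have := neg_abs_le (2 * l.re * (t1 * t2))
      have habs : |t1 * t2| = |t1| * |t2| := abs_mul t1 t2
      nlinarith [sq_abs t1, sq_abs t2]
    have hb2 : r ≤ (|t1| + |t2|) ^ 2 := by
      have h2 : |2 * l.re * (t1 * t2)| ≤ 2 * |t1 * t2| := by
        rw [abs_mul]
        have : |t1 * t2| ≥ 0 := abs_nonneg _
        nlinarith [neg_abs_le (2 * l.re), le_abs_self (2 * l.re)]
      have := le_abs_self (2 * l.re * (t1 * t2))
      have habs : |t1 * t2| = |t1| * |t2| := abs_mul t1 t2
      nlinarith [sq_abs t1, sq_abs t2]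
    have hr0 : 0 ≤ r := le_trans (sq_nonneg _) hb1
    -- z = ± sqrt r
    set w : ℝ := Real.sqrt r with hw
    have hw2 : (w : ℂ) ^ 2 = (r : ℂ) := by
      norm_cast
      exact Real.sq_sqrt hr0
    have hzw : z = (w : ℂ) ∨ z = ((-w : ℝ) : ℂ) := by
      have : (z - w) * (z + w) = 0 := by
        have : z ^ 2 - (w : ℂ) ^ 2 = 0 := by rw [hz2, hw2]; ring
        linear_combination this
      rcases mul_eq_zero.mp this with h | h
      · left; linear_combination h
      · right; push_cast [Complex.ofReal_neg]; linear_combination h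
    -- derive contradiction with hz
    apply hz
    have hwb1 : |(|t1| - |t2|)| ≤ w := by
      rw [hw]
      have : |(|t1| - |t2|)| = Real.sqrt ((|t1| - |t2|) ^ 2) := by
        rw [Real.sqrt_sq_eq_abs]
      rw [this]
      exact Real.sqrt_le_sqrt hb1
    have hwb2 : w ≤ |t1| + |t2| := by
      rw [hw]
      have : |t1| + |t2| = Real.sqrt ((|t1| + |t2|) ^ 2) := by
        rw [Real.sqrt_sq (by positivity)]
      rw [this]
      exact Real.sqrt_le_sqrt hb2
    have hwnn : 0 ≤ w := Real.sqrt_nonneg r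
    rcases hzw with h | h
    · exact ⟨w, h, by rwa [abs_of_nonneg hwnn], by rwa [abs_of_nonneg hwnn]⟩
    · refine ⟨-w, h, ?_, ?_⟩ <;> rw [abs_neg, abs_of_nonneg hwnn] <;> assumption
  -- |l| * |m| = 1
  have habsprod : ‖l‖ * ‖m‖ = 1 := by
    rw [← norm_mul, hprod, norm_one]
  have hlm0 : ‖l‖ > 0 := by
    rcases eq_or_lt_of_le (norm_nonneg l) with h | h
    · exfalso; rw [← h] at habsprod; simp at habsprod
    · exact h
  rcases lt_or_gt_of_ne key with hlt | hgt
  · refine ⟨l, m, hlt, ?_, hprod, hroots⟩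
    nlinarith
  · refine ⟨m, l, ?_, hgt, by rw [mul_comm]; exact hprod, ?_⟩
    · nlinarith [norm_nonneg m]
    · rw [hroots]; exact Multiset.pair_comm l m
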